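/- Let X be a separation of a graph G with |∂(X)| = k finite, and let Y be a tight separation such that G − ∂(Y) has at least k+1 connected components. Then at least one of the two sets ∂(Y) \ V(X) and ∂(Y) \ V(X^∁) is empty. -/

import Mathlib

namespace Paper

variable {V : Type*} {ι : Type*}

def edgeVerts (X : Set (Sym2 V)) : Set V := {v | ∃ e ∈ X, v ∈ e}

def ecompl (G : SimpleGraph V) (X : Set (Sym2 V)) : Set (Sym2 V) := G.edgeSet \ X

def bdry (G : SimpleGraph V) (X : Set (Sym2 V)) : Set V :=
  {v | (∃ e ∈ X, v ∈ e) ∧ ∃ e ∈ ecompl G X, v ∈ e}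

def Nested (G : SimpleGraph V) (X Y : Set (Sym2 V)) : Prop :=
  X ⊆ Y ∨ ecompl G X ⊆ Y ∨ Y ⊆ X ∨ Y ⊆ ecompl G X

def ReachOutside (G : SimpleGraph V) (S : Set V) (u v : V) : Prop :=
  ∃ p : G.Walk u v, ∀ x ∈ p.support, x ∉ S

def IsCompOutside (G : SimpleGraph V) (S : Set V) (C : Set V) : Prop :=
  ∃ v, v ∉ S ∧ C = {u | ReachOutside G S u v}

def sEdges (G : SimpleGraph V) (C : Set V) : Set (Sym2 V) :=
  {e | e ∈ G.edgeSet ∧ ∃ v ∈ C, v ∈ e}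

def IsRay (G : SimpleGraph V) (f : ℕ → V) : Prop :=
  Function.Injective f ∧ ∀ n, G.Adj (f n) (f (n + 1))

def RayEquiv (G : SimpleGraph V) (f g : ℕ → V) : Prop :=
  ∀ S : Set V, S.Finite → ∃ N, ∀ i ≥ N, ∀ j ≥ N, ReachOutside G S (f i) (g j)

def LivesIn (f : ℕ → V) (X : Set (Sym2 V)) : Prop :=
  ∃ N, ∀ n ≥ N, f n ∈ edgeVerts X

def Dominates (G : SimpleGraph V) (v : V) (f : ℕ → V) : Prop :=
  ∃ (g : ℕ → ℕ) (p : (k : ℕ) → G.Walk v (f (g k))),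
    StrictMono g ∧ (∀ k, (p k).IsPath) ∧
    ∀ k l, k ≠ l → ∀ x, x ∈ (p k).support → x ∈ (p l).support → x = v

section Aux

variable {G : SimpleGraph V} {S : Set V} {X : Set (Sym2 V)}

lemma reach_symm {u v : V} (h : ReachOutside G S u v) : ReachOutside G S v u := by
  obtain ⟨p, hp⟩ := h
  exact ⟨p.reverse, fun x hx => hp x (by simpa using hx)⟩

lemma reach_trans {u v w : V} (h1 : ReachOutside G S u v) (h2 : ReachOutside G S v w) :
    ReachOutside G S u w := by
  obtain ⟨p, hp⟩ := h1
  obtain ⟨q, hq⟩ := h2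
  refine ⟨p.append q, fun x hx => ?_⟩
  rcases (SimpleGraph.Walk.mem_support_append_iff p q).1 hx with h | h
  · exact hp x h
  · exact hq x h

lemma comp_not_mem {C : Set V} (hC : IsCompOutside G S C) {u : V} (hu : u ∈ C) : u ∉ S := by
  obtain ⟨v, hv, rfl⟩ := hC
  obtain ⟨p, hp⟩ := hu
  exact hp u p.start_mem_support

lemma comp_eq {C C' : Set V} (hC : IsCompOutside G S C) (hC' : IsCompOutside G S C')
    {w : V} (hw : w ∈ C) (hw' : w ∈ C') : C = C' := by
  obtain ⟨v, hv, rfl⟩ := hC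
  obtain ⟨v', hv', rfl⟩ := hC'
  ext u
  constructor
  · intro hu; exact reach_trans (reach_trans hu (reach_symm hw)) hw'
  · intro hu; exact reach_trans (reach_trans hu (reach_symm hw')) hw

lemma reach_of_mem_support {c d x : V} (q : G.Walk c d) (hq : ∀ y ∈ q.support, y ∉ S)
    (hx : x ∈ q.support) : ReachOutside G S x d := by
  induction q with
  | nil =>
    simp only [SimpleGraph.Walk.support_nil, List.mem_singleton] at hx
    subst hx
    exact ⟨SimpleGraph.Walk.nil, hq⟩
  | @cons u v w h q ih =>
    rw [SimpleGraph.Walk.support_cons, List.mem_cons] at hx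
    rcases hx with rfl | hx
    · exact ⟨SimpleGraph.Walk.cons h q, hq⟩
    · exact ih (fun y hy => hq y (by rw [SimpleGraph.Walk.support_cons]; exact List.mem_cons_of_mem _ hy)) hx

lemma switch {x y : V} (p : G.Walk x y)
    (h1 : ∃ e ∈ p.edges, e ∈ X) (h2 : ∃ e ∈ p.edges, e ∈ ecompl G X) :
    ∃ w ∈ p.support, w ∈ bdry G X := by
  induction p with
  | nil => simp at h1
  | @cons u v z h q ih =>
    by_cases hq1 : ∃ e ∈ q.edges, e ∈ X
    · by_cases hq2 : ∃ e ∈ q.edges, e ∈ ecompl G X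
      · obtain ⟨w, hw, hwb⟩ := ih hq1 hq2
        exact ⟨w, by rw [SimpleGraph.Walk.support_cons]; exact List.mem_cons_of_mem _ hw, hwb⟩
      · obtain ⟨e2, he2, he2c⟩ := h2
        rw [SimpleGraph.Walk.edges_cons, List.mem_cons] at he2
        rcases he2 with rfl | he2
        · obtain ⟨e1, he1, he1X⟩ := hq1
          cases q with
          | nil => simp at he1
          | @cons v z' z hq' q' =>
            refine ⟨v, by simp [SimpleGraph.Walk.support_cons], ⟨s(v, z'), ?_, by simp⟩,
              ⟨s(u, v), he2c, by simp⟩⟩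
            have hfe : s(v, z') ∈ (SimpleGraph.Walk.cons hq' q').edges := by
              rw [SimpleGraph.Walk.edges_cons]; exact List.mem_cons_self
            have hE : s(v, z') ∈ G.edgeSet := SimpleGraph.Walk.edges_subset_edgeSet _ hfe
            by_contra hXn
            exact hq2 ⟨s(v, z'), hfe, hE, hXn⟩
        · exact absurd ⟨e2, he2, he2c⟩ hq2
    · obtain ⟨e1, he1, he1X⟩ := h1
      rw [SimpleGraph.Walk.edges_cons, List.mem_cons] at he1
      rcases he1 with rfl | he1
      · obtain ⟨e2, he2, he2c⟩ := h2
        rw [SimpleGraph.Walk.edges_cons, List.mem_cons] at he2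
        rcases he2 with rfl | he2
        · exact absurd he1X he2c.2
        · cases q with
          | nil => simp at he2
          | @cons v z' z hq' q' =>
            refine ⟨v, by simp [SimpleGraph.Walk.support_cons], ⟨s(u, v), he1X, by simp⟩,
              ⟨s(v, z'), ?_, by simp⟩⟩
            have hfe : s(v, z') ∈ (SimpleGraph.Walk.cons hq' q').edges := by
              rw [SimpleGraph.Walk.edges_cons]; exact List.mem_cons_self
            have hE : s(v, z') ∈ G.edgeSet := SimpleGraph.Walk.edges_subset_edgeSet _ hfe
            refine ⟨hE, fun hXm => hq1 ⟨s(v, z'), hfe, hXm⟩⟩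
      · exact absurd ⟨e1, he1, he1X⟩ hq1

end Aux

theorem stmt3 (G : SimpleGraph V) (X Y : Set (Sym2 V)) (k : ℕ)
    (hX : X ⊆ G.edgeSet) (hY : Y ⊆ G.edgeSet)
    (hfX : (bdry G X).Finite) (hkX : (bdry G X).ncard = k)
    (htight : ∀ C : Set V, IsCompOutside G (bdry G Y) C → bdry G (sEdges G C) = bdry G Y)
    (hcomps : ∃ Cs : Fin (k + 1) → Set V,
      Function.Injective Cs ∧ ∀ i, IsCompOutside G (bdry G Y) (Cs i)) :
    bdry G Y \ edgeVerts X = ∅ ∨ bdry G Y \ edgeVerts (ecompl G X) = ∅ := by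
  by_contra hcon
  push_neg at hcon
  obtain ⟨h1, h2⟩ := hcon
  obtain ⟨a, haY, haX⟩ := h1
  obtain ⟨b, hbY, hbc⟩ := h2
  obtain ⟨Cs, hinj, hcomp⟩ := hcomps
  have key : ∀ i : Fin (k + 1), ∃ w, w ∈ Cs i ∧ w ∈ bdry G X := by
    intro i
    have hti := htight (Cs i) (hcomp i)
    -- a neighbour of a in Cs i, via an edge in ecompl
    have haC : a ∈ bdry G (sEdges G (Cs i)) := by rw [hti]; exact haY
    obtain ⟨⟨e, ⟨heE, v, hvC, hve⟩, hae⟩, -⟩ := haC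
    have hva : a ≠ v := fun h => comp_not_mem (hcomp i) (h ▸ hvC) haY
    have he : e = s(a, v) := (Sym2.mem_and_mem_iff hva).1 ⟨hae, hve⟩
    subst he
    have hadj : G.Adj a v := heE
    have heC : s(a, v) ∈ ecompl G X := ⟨heE, fun hXm => haX ⟨s(a, v), hXm, by simp⟩⟩
    -- a neighbour of b in Cs i, via an edge in X
    have hbC : b ∈ bdry G (sEdges G (Cs i)) := by rw [hti]; exact hbY
    obtain ⟨⟨f, ⟨hfE, d, hdC, hdf⟩, hbf⟩, -⟩ := hbC
    have hdb : b ≠ d := fun h => comp_not_mem (hcomp i) (h ▸ hdC) hbY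
    have hf : f = s(b, d) := (Sym2.mem_and_mem_iff hdb).1 ⟨hbf, hdf⟩
    subst hf
    have hbadj : G.Adj b d := hfE
    have hfX' : s(b, d) ∈ X := by
      by_contra hXn
      exact hbc ⟨s(b, d), ⟨hfE, hXn⟩, by simp⟩
    -- walk from v to d inside Cs i
    obtain ⟨v0, hv0, hCeq⟩ := hcomp i
    have hvR : ReachOutside G (bdry G Y) v v0 := by rw [hCeq] at hvC; exact hvC
    have hdR : ReachOutside G (bdry G Y) d v0 := by rw [hCeq] at hdC; exact hdC
    obtain ⟨q, hqS⟩ := reach_trans hvR (reach_symm hdR)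
    -- the walk a - v - ... - d - b
    set W : G.Walk a b := SimpleGraph.Walk.cons hadj (q.concat hbadj.symm) with hW
    have hWedges : ∃ e ∈ W.edges, e ∈ X := by
      refine ⟨s(d, b), ?_, by rwa [Sym2.eq_swap]⟩
      rw [hW, SimpleGraph.Walk.edges_cons, SimpleGraph.Walk.edges_concat]
      simp
    have hWedges2 : ∃ e ∈ W.edges, e ∈ ecompl G X := by
      refine ⟨s(a, v), ?_, heC⟩
      rw [hW, SimpleGraph.Walk.edges_cons]
      exact List.mem_cons_self
    obtain ⟨w, hwsup, hwb⟩ := switch W hWedges hWedges2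
    rw [hW, SimpleGraph.Walk.support_cons, SimpleGraph.Walk.support_concat] at hwsup
    rcases List.mem_cons.1 hwsup with rfl | hwsup
    · exact absurd hwb.1 haX
    · rcases List.mem_append.1 hwsup with hwsup | hwsup
      · refine ⟨w, ?_, hwb⟩
        have hwR : ReachOutside G (bdry G Y) w d := reach_of_mem_support q hqS hwsup
        rw [hCeq]
        exact reach_trans hwR hdR
      · rw [List.mem_singleton] at hwsup
        subst hwsup
        exact absurd hwb.2 hbc
  choose g hg using key
  have hginj : Function.Injective g := by
    intro i j hij
    exact hinj (comp_eq (hcomp i) (hcomp j) (hg i).1 (hij ▸ (hg j).1))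
  have hle : k + 1 ≤ k := by
    calc k + 1 = (Finset.univ : Finset (Fin (k + 1))).card := by simp
      _ ≤ hfX.toFinset.card := Finset.card_le_card_of_injOn g
          (fun i _ => hfX.mem_toFinset.2 (hg i).2) (Function.Injective.injOn hginj)
      _ = k := by rw [← Set.ncard_eq_toFinset_card _ hfX]; exact hkX
  omega

end Paper
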